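/- Let S be a numerical semigroup with conductor c and define Δ(δ) := δ + 2·|S ∩ [δ, c−1]| for δ ∈ S ∩ [0, c]. Then there exists δ ∈ S ∩ [0, c] with δ ≥ c/2 at which Δ attains its maximum over S ∩ [0, c]. -/

import Mathlib

/-- A numerical semigroup: a cofinite additive submonoid of ℕ. -/
def IsNumericalSemigroup (S : Set ℕ) : Prop :=
  0 ∈ S ∧ (∀ a ∈ S, ∀ b ∈ S, a + b ∈ S) ∧ (Sᶜ : Set ℕ).Finite

/-- The sgConductor of a numerical semigroup: least c with [c,∞) ⊆ S. -/
noncomputable def sgConductor (S : Set ℕ) : ℕ :=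
  sInf {c | ∀ n, c ≤ n → n ∈ S}

/-- Δ attains its maximum over S ∩ [0, c] at some δ ≥ c/2. -/
theorem stmt12 (S : Set ℕ) (hS : IsNumericalSemigroup S) :
    ∃ δ, δ ∈ S ∧ δ ≤ sgConductor S ∧ sgConductor S ≤ 2 * δ ∧
      ∀ δ' ∈ S, δ' ≤ sgConductor S →
        δ' + 2 * (S ∩ Set.Ico δ' (sgConductor S)).ncard
          ≤ δ + 2 * (S ∩ Set.Ico δ (sgConductor S)).ncard := by
  obtain ⟨h0, hadd, hfin⟩ := hS
  set c := sgConductor S with hcdef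
  -- conductor property
  have hne : {m : ℕ | ∀ n, m ≤ n → n ∈ S}.Nonempty := by
    obtain ⟨N, hN⟩ := hfin.bddAbove
    refine ⟨N + 1, fun n hn => ?_⟩
    by_contra h
    have := hN (Set.mem_compl h)
    omega
  have hc : ∀ n, c ≤ n → n ∈ S := Nat.sInf_mem hne
  have hcS : c ∈ S := hc c le_rfl
  -- involution: x ∈ S, x < c ⇒ c-1-x ∉ S
  have hinv : ∀ x ∈ S, x < c → (c - 1 - x) ∉ S := by
    intro x hx hxc h
    have h1 : c - 1 ∈ S := by
      have h2 := hadd x hx _ h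
      have h3 : x + (c - 1 - x) = c - 1 := by omega
      rwa [h3] at h2
    have h4 : c ≤ c - 1 := Nat.sInf_le (fun n hn => by
      rcases eq_or_lt_of_le hn with rfl | h'
      · exact h1
      · exact hc n (by omega))
    omega
  -- counting lemma: S fills at most half of [δ, c-δ)
  have hcount : ∀ δ ∈ S, 2 * δ ≤ c →
      2 * (S ∩ Set.Ico δ (c - δ)).ncard ≤ c - 2 * δ := by
    intro δ hδ h2δ
    have hfinI : (Set.Ico δ (c - δ)).Finite := Set.finite_Ico _ _
    have hfin1 : (S ∩ Set.Ico δ (c - δ)).Finite := hfinI.subset Set.inter_subset_right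
    have hfin2 : (Sᶜ ∩ Set.Ico δ (c - δ)).Finite := hfinI.subset Set.inter_subset_right
    have h1 : (S ∩ Set.Ico δ (c - δ)).ncard ≤ (Sᶜ ∩ Set.Ico δ (c - δ)).ncard := by
      refine Set.ncard_le_ncard_of_injOn (fun x => c - 1 - x) ?_ ?_ hfin2
      · rintro x ⟨hxS, hx1, hx2⟩
        have hxc : x < c := by simp [Set.mem_Ico] at *; omega
        refine ⟨hinv x hxS hxc, ?_⟩
        simp only [Set.mem_Ico] at hx2 ⊢
        omega
      · rintro x ⟨_, hx⟩ y ⟨_, hy⟩ hxy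
        simp only [Set.mem_Ico] at hx hy
        simp only at hxy
        omega
    have hu : (S ∩ Set.Ico δ (c - δ)) ∪ (Sᶜ ∩ Set.Ico δ (c - δ)) = Set.Ico δ (c - δ) := by
      ext x
      simp only [Set.mem_union, Set.mem_inter_iff, Set.mem_compl_iff]
      tauto
    have hd : Disjoint (S ∩ Set.Ico δ (c - δ)) (Sᶜ ∩ Set.Ico δ (c - δ)) := by
      rw [Set.disjoint_iff]
      rintro x ⟨⟨hx, _⟩, ⟨hx', _⟩⟩
      exact absurd hx hx'
    have h2 := Set.ncard_union_eq hd hfin1 hfin2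
    rw [hu] at h2
    have h3 : (Set.Ico δ (c - δ)).ncard = c - δ - δ := by
      rw [← Finset.coe_Ico, Set.ncard_coe_finset, Nat.card_Ico]
    omega
  -- maximizer over T = S ∩ [0, c]
  have hTfin : {x | x ∈ S ∧ x ≤ c}.Finite :=
    (Set.finite_Iic c).subset (fun x hx => hx.2)
  obtain ⟨δ0, hδ0T, hmax0⟩ :=
    Set.Finite.exists_maximalFor (fun δ => δ + 2 * (S ∩ Set.Ico δ c).ncard) _ hTfin
      ⟨c, hcS, le_rfl⟩
  have hmax : ∀ a ∈ S, a ≤ c →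
      a + 2 * (S ∩ Set.Ico a c).ncard ≤ δ0 + 2 * (S ∩ Set.Ico δ0 c).ncard := by
    intro a ha hac
    by_contra h
    push_neg at h
    have : a + 2 * (S ∩ Set.Ico a c).ncard ≤ δ0 + 2 * (S ∩ Set.Ico δ0 c).ncard := hmax0 (j := a) ⟨ha, hac⟩ h.le
    omega
  by_cases h2 : c ≤ 2 * δ0
  · exact ⟨δ0, hδ0T.1, hδ0T.2, h2, fun δ' h1' h2' => hmax δ' h1' h2'⟩
  · push_neg at h2
    have hAne : {x | x ∈ S ∧ c - δ0 ≤ x}.Nonempty := ⟨c, hcS, by omega⟩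
    set δ' := sInf {x | x ∈ S ∧ c - δ0 ≤ x} with hδ'def
    have hδ'A : δ' ∈ S ∧ c - δ0 ≤ δ' := Nat.sInf_mem hAne
    have hδ'c : δ' ≤ c := Nat.sInf_le ⟨hcS, by omega⟩
    have hδ0δ' : δ0 ≤ δ' := by omega
    refine ⟨δ', hδ'A.1, hδ'c, by omega, ?_⟩
    intro δ'' hS'' hc''
    have hle := hmax _ hS'' hc''
    have hkey : δ0 + 2 * (S ∩ Set.Ico δ0 c).ncard ≤ δ' + 2 * (S ∩ Set.Ico δ' c).ncard := by
      have hsplit : S ∩ Set.Ico δ0 c = (S ∩ Set.Ico δ0 δ') ∪ (S ∩ Set.Ico δ' c) := by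
        ext x
        simp only [Set.mem_inter_iff, Set.mem_union, Set.mem_Ico]
        constructor
        · rintro ⟨hx, h1', h2'⟩
          rcases lt_or_ge x δ' with h | h
          · exact Or.inl ⟨hx, h1', h⟩
          · exact Or.inr ⟨hx, h, h2'⟩
        · rintro (⟨hx, h1', h2'⟩ | ⟨hx, h1', h2'⟩) <;> exact ⟨hx, by omega, by omega⟩
      have hd : Disjoint (S ∩ Set.Ico δ0 δ') (S ∩ Set.Ico δ' c) := by
        rw [Set.disjoint_iff]
        rintro x ⟨⟨_, _, hx1⟩, ⟨_, hx2, _⟩⟩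
        omega
      have hf1 : (S ∩ Set.Ico δ0 δ').Finite :=
        (Set.finite_Ico _ _).subset Set.inter_subset_right
      have hf2 : (S ∩ Set.Ico δ' c).Finite :=
        (Set.finite_Ico _ _).subset Set.inter_subset_right
      have hcard : (S ∩ Set.Ico δ0 c).ncard
          = (S ∩ Set.Ico δ0 δ').ncard + (S ∩ Set.Ico δ' c).ncard := by
        rw [hsplit, Set.ncard_union_eq hd hf1 hf2]
      have hsub : S ∩ Set.Ico δ0 δ' ⊆ S ∩ Set.Ico δ0 (c - δ0) := by
        rintro x ⟨hxS, hx1, hx2⟩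
        refine ⟨hxS, hx1, ?_⟩
        by_contra h
        push_neg at h
        have : δ' ≤ x := Nat.sInf_le ⟨hxS, h⟩
        omega
      have hb : (S ∩ Set.Ico δ0 δ').ncard ≤ (S ∩ Set.Ico δ0 (c - δ0)).ncard :=
        Set.ncard_le_ncard hsub ((Set.finite_Ico _ _).subset Set.inter_subset_right)
      have hcnt := hcount δ0 hδ0T.1 (by omega)
      omega
    omega
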